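/- Let σ be a nondegenerate k-simplex in ℝ^d (k ≥ 1) with shortest edge length L(σ) ≥ λ > 0 and thickness Υ(σ) > 0, and let ξ₁, ξ₂ be weight assignments on the vertices of σ such that there exists a vertex p of σ with ξ₁(q) = ξ₂(q) for all vertices q ≠ p and |ξ₁(p)² − ξ₂(p)²| ≤ δ₀²λ². Then the weighted centers satisfy ‖C_{ξ₁}(σ) − C_{ξ₂}(σ)‖ ≤ δ₀²λ/(2Υ(σ)), and for every point r ∈ ℝ^d, |dist(r, N_{ξ₁}(σ)) − dist(r, N_{ξ₂}(σ))| ≤ δ₀²λ/(2Υ(σ)). -/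

import Mathlib

noncomputable section

attribute [local instance] Classical.propDecidable

open Metric RealInnerProductSpace

/-- The `ω`-weighted normal space of a simplex with vertex set `τ`. -/
def wNormal {d : ℕ} (ω : EuclideanSpace ℝ (Fin d) → ℝ) (τ : Finset (EuclideanSpace ℝ (Fin d))) :
    Set (EuclideanSpace ℝ (Fin d)) :=
  {x | ∀ a ∈ τ, ∀ b ∈ τ, ‖x - a‖ ^ 2 - ω a ^ 2 = ‖x - b‖ ^ 2 - ω b ^ 2}

private lemma key_id {d : ℕ} (x w a b : EuclideanSpace ℝ (Fin d)) :
    ‖x + w - a‖ ^ 2 - ‖x - a‖ ^ 2 - (‖x + w - b‖ ^ 2 - ‖x - b‖ ^ 2)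
      = 2 * ⟪w, b - a⟫ := by
  have h1 : x + w - a = (x - a) + w := by abel
  have h2 : x + w - b = (x - b) + w := by abel
  rw [h1, h2, norm_add_sq_real, norm_add_sq_real]
  simp only [inner_sub_left, inner_sub_right, real_inner_comm w]
  ring

private lemma min_perp {d : ℕ} (S : Set (EuclideanSpace ℝ (Fin d)))
    (m pt u : EuclideanSpace ℝ (Fin d))
    (hmin : ∀ x ∈ S, ‖m - pt‖ ^ 2 ≤ ‖x - pt‖ ^ 2)
    (hu : ∀ t : ℝ, m + t • u ∈ S) :
    ⟪u, m - pt⟫ = 0 := by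
  set c := ⟪u, m - pt⟫ with hc
  have key : ∀ t : ℝ, 0 ≤ 2 * t * c + t ^ 2 * ‖u‖ ^ 2 := by
    intro t
    have h := hmin _ (hu t)
    have hexp : ‖m + t • u - pt‖ ^ 2 = ‖m - pt‖ ^ 2 + 2 * t * c + t ^ 2 * ‖u‖ ^ 2 := by
      have h1 : m + t • u - pt = (m - pt) + t • u := by abel
      rw [h1, norm_add_sq_real, real_inner_smul_right, norm_smul, real_inner_comm]
      simp [mul_pow, sq_abs, hc]
      ring
    rw [hexp] at h
    linarith
  have hN : (0:ℝ) < ‖u‖ ^ 2 + 1 := by positivity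
  set s : ℝ := 1 / (‖u‖ ^ 2 + 1) with hsdef
  have hs : 0 < s := by positivity
  have hN' : s * ‖u‖ ^ 2 = 1 - s := by
    rw [hsdef]
    field_simp
    ring
  have h := key (-c * s)
  have h2 : (0:ℝ) ≤ -(c ^ 2) * s - c ^ 2 * s ^ 2 := by
    have hexp : 2 * (-c * s) * c + (-c * s) ^ 2 * ‖u‖ ^ 2
        = -2 * c ^ 2 * s + c ^ 2 * s * (s * ‖u‖ ^ 2) := by ring
    rw [hexp, hN'] at h
    nlinarith [h]
  have hc2 : c ^ 2 ≤ 0 := by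
    nlinarith [h2, hs, sq_nonneg c, sq_nonneg s, mul_pos hs hs]
  have : c ^ 2 = 0 := le_antisymm hc2 (sq_nonneg c)
  exact pow_eq_zero_iff (by norm_num) |>.mp this

set_option maxHeartbeats 2000000 in
/-- Stability of weighted centers and weighted normal spaces of a thick simplex under an
elementary perturbation of the weight of one vertex. -/
theorem weighted_center_stability
    (d k : ℕ) (hk : 1 ≤ k)
    (σ : Finset (EuclideanSpace ℝ (Fin d))) (hcard : σ.card = k + 1)
    (hind : AffineIndependent ℝ ((↑) : {x // x ∈ σ} → EuclideanSpace ℝ (Fin d)))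
    (hσne : σ.Nonempty) (hprod : (σ ×ˢ σ).Nonempty) (hoff : σ.offDiag.Nonempty)
    (lam δ0 : ℝ) (hlam : 0 < lam)
    (Δ Lmin Υ : ℝ)
    -- `Δ(σ)`: the diameter (longest edge length) of `σ`
    (hΔ : Δ = (σ ×ˢ σ).sup' hprod fun pq => dist pq.1 pq.2)
    -- `L(σ)`: the shortest edge length of `σ`
    (hLmin : Lmin = σ.offDiag.inf' hoff fun pq => dist pq.1 pq.2)
    (hL : lam ≤ Lmin)
    -- `Υ(σ)`: the thickness of `σ`
    (hΥ : Υ = (σ.inf' hσne fun p =>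
        Metric.infDist p (affineSpan ℝ ((σ.erase p : Finset _) : Set (EuclideanSpace ℝ (Fin d)))))
      / (k * Δ))
    (hΥpos : 0 < Υ)
    (ξ1 ξ2 : EuclideanSpace ℝ (Fin d) → ℝ)
    (hξ1 : ∀ q ∈ σ, 0 ≤ ξ1 q) (hξ2 : ∀ q ∈ σ, 0 ≤ ξ2 q)
    (p : EuclideanSpace ℝ (Fin d)) (hp : p ∈ σ)
    (heq : ∀ q ∈ σ, q ≠ p → ξ1 q = ξ2 q)
    (hdiff : |ξ1 p ^ 2 - ξ2 p ^ 2| ≤ δ0 ^ 2 * lam ^ 2)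
    -- the weighted centers of `σ` for the two weight assignments
    (C1 C2 : EuclideanSpace ℝ (Fin d))
    (hC1 : C1 ∈ wNormal ξ1 σ)
    (hC1min : ∀ x ∈ wNormal ξ1 σ, ‖C1 - p‖ ^ 2 - ξ1 p ^ 2 ≤ ‖x - p‖ ^ 2 - ξ1 p ^ 2)
    (hC2 : C2 ∈ wNormal ξ2 σ)
    (hC2min : ∀ x ∈ wNormal ξ2 σ, ‖C2 - p‖ ^ 2 - ξ2 p ^ 2 ≤ ‖x - p‖ ^ 2 - ξ2 p ^ 2) :
    ‖C1 - C2‖ ≤ δ0 ^ 2 * lam / (2 * Υ) ∧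
    ∀ r : EuclideanSpace ℝ (Fin d),
      |Metric.infDist r (wNormal ξ1 σ) - Metric.infDist r (wNormal ξ2 σ)| ≤
        δ0 ^ 2 * lam / (2 * Υ) := by
  classical
  set w : (EuclideanSpace ℝ (Fin d)) := C2 - C1 with hw
  set ε : ℝ := ξ1 p ^ 2 - ξ2 p ^ 2 with hεdef
  have hC2eq : C1 + w = C2 := by rw [hw]; abel
  simp only [wNormal, Set.mem_setOf_eq] at hC1 hC2
  -- the fundamental relation for `w`
  have hww : ∀ a ∈ σ, ∀ b ∈ σ,
      2 * ⟪w, b - a⟫ = (ξ2 a ^ 2 - ξ1 a ^ 2) - (ξ2 b ^ 2 - ξ1 b ^ 2) := by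
    intro a ha b hb
    have hkid := key_id C1 w a b
    rw [hC2eq] at hkid
    have h1 := hC1 a ha b hb
    have h2 := hC2 a ha b hb
    linarith
  have hrel : ∀ q ∈ σ, q ≠ p → ⟪w, q - p⟫ = -(ε / 2) := by
    intro q hq hqp
    have h := hww q hq p hp
    have hx : ξ1 q = ξ2 q := heq q hq hqp
    have hneg : (p - q : (EuclideanSpace ℝ (Fin d))) = -(q - p) := by abel
    rw [hneg, inner_neg_right] at h
    rw [hx] at h
    rw [hεdef]
    linarith
  -- translation between the two normal spaces
  have htrans : ∀ x ∈ wNormal ξ1 σ, (x + w) ∈ wNormal ξ2 σ := by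
    intro x hx
    simp only [wNormal, Set.mem_setOf_eq] at hx ⊢
    intro a ha b hb
    have hkid := key_id x w a b
    have h1 := hx a ha b hb
    have h2 := hww a ha b hb
    linarith
  have htrans' : ∀ y ∈ wNormal ξ2 σ, (y - w) ∈ wNormal ξ1 σ := by
    intro y hy
    simp only [wNormal, Set.mem_setOf_eq] at hy ⊢
    intro a ha b hb
    have hkid := key_id (y - w) w a b
    rw [sub_add_cancel] at hkid
    have h1 := hy a ha b hb
    have h2 := hww a ha b hb
    linarith
  -- w lies in the span of the vectors q - p
  set KK : Submodule ℝ (EuclideanSpace ℝ (Fin d)) :=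
    Submodule.span ℝ ((σ.image (fun q => q - p) : Finset (EuclideanSpace ℝ (Fin d))) : Set (EuclideanSpace ℝ (Fin d))) with hKK
  have horth : ∀ u ∈ KKᗮ, ⟪u, w⟫ = 0 := by
    intro u hu
    have huqp : ∀ q ∈ σ, ⟪u, q - p⟫ = 0 := by
      intro q hq
      have hmem : (q - p : (EuclideanSpace ℝ (Fin d))) ∈ KK :=
        Submodule.subset_span (by
          simp only [Finset.coe_image, Set.mem_image, Finset.mem_coe]
          exact ⟨q, hq, rfl⟩)
      have := (Submodule.mem_orthogonal KK u).1 hu (q - p) hmem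
      rw [real_inner_comm] at this
      exact this
    have huab : ∀ a ∈ σ, ∀ b ∈ σ, ⟪u, a - b⟫ = 0 := by
      intro a ha b hb
      have hab : (a - b : (EuclideanSpace ℝ (Fin d))) = (a - p) - (b - p) := by abel
      rw [hab, inner_sub_right, huqp a ha, huqp b hb, sub_zero]
    have hmem1 : ∀ t : ℝ, C1 + t • u ∈ wNormal ξ1 σ := by
      intro t
      simp only [wNormal, Set.mem_setOf_eq]
      intro a ha b hb
      have hkid := key_id C1 (t • u) a b
      have h1 := hC1 a ha b hb
      have h0 : ⟪(t • u : (EuclideanSpace ℝ (Fin d))), b - a⟫ = 0 := by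
        rw [real_inner_smul_left, huab b hb a ha, mul_zero]
      linarith
    have hmem2 : ∀ t : ℝ, C2 + t • u ∈ wNormal ξ2 σ := by
      intro t
      simp only [wNormal, Set.mem_setOf_eq]
      intro a ha b hb
      have hkid := key_id C2 (t • u) a b
      have h1 := hC2 a ha b hb
      have h0 : ⟪(t • u : (EuclideanSpace ℝ (Fin d))), b - a⟫ = 0 := by
        rw [real_inner_smul_left, huab b hb a ha, mul_zero]
      linarith
    have hperp1 : ⟪u, C1 - p⟫ = 0 := by
      refine min_perp (wNormal ξ1 σ) C1 p u ?_ hmem1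
      intro x hx
      have := hC1min x hx
      linarith
    have hperp2 : ⟪u, C2 - p⟫ = 0 := by
      refine min_perp (wNormal ξ2 σ) C2 p u ?_ hmem2
      intro x hx
      have := hC2min x hx
      linarith
    have hwdecomp : w = (C2 - p) - (C1 - p) := by rw [hw]; abel
    rw [hwdecomp, inner_sub_right, hperp1, hperp2, sub_zero]
  have hwK : w ∈ KK := by
    have hKKproj : KKᗮᗮ = KK := Submodule.orthogonal_orthogonal KK
    rw [← hKKproj]
    exact (Submodule.mem_orthogonal KKᗮ w).2 horth
  obtain ⟨f, -, hf⟩ := Submodule.mem_span_finset.1 hwK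
  set c : (EuclideanSpace ℝ (Fin d)) → ℝ := fun q => f (q - p) with hcdef
  have hinj : ∀ x ∈ σ, ∀ y ∈ σ, x - p = y - p → x = y := by
    intro x _ y _ h
    exact sub_left_injective h
  have hsum : ∑ q ∈ σ, c q • (q - p) = w := by
    rw [← hf, Finset.sum_image hinj]
  -- the orthogonal projection of p onto the affine span of the other vertices
  have hepcard : (σ.erase p).card = k := by
    rw [Finset.card_erase_of_mem hp, hcard]
    omega
  have hepne : (σ.erase p).Nonempty := by
    rw [← Finset.card_pos, hepcard]; omega
  set A : AffineSubspace ℝ (EuclideanSpace ℝ (Fin d)) :=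
    affineSpan ℝ ((σ.erase p : Finset (EuclideanSpace ℝ (Fin d))) : Set (EuclideanSpace ℝ (Fin d))) with hA
  have hAne : ((A : Set (EuclideanSpace ℝ (Fin d)))).Nonempty := by
    obtain ⟨q, hq⟩ := hepne
    exact ⟨q, subset_affineSpan ℝ _ (Finset.mem_coe.2 hq)⟩
  haveI : Nonempty A := hAne.to_subtype
  set m : (EuclideanSpace ℝ (Fin d)) := (EuclideanGeometry.orthogonalProjection A p : (EuclideanSpace ℝ (Fin d))) with hm
  have hmA : m ∈ A := EuclideanGeometry.orthogonalProjection_mem p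
  have hperpm : p -ᵥ m ∈ A.directionᗮ :=
    EuclideanGeometry.vsub_orthogonalProjection_mem_direction_orthogonal A p
  -- w is orthogonal to the direction of A
  have hwdir : ∀ v ∈ A.direction, ⟪w, v⟫ = 0 := by
    have hdirle : A.direction ≤ (Submodule.span ℝ {w})ᗮ := by
      rw [hA, direction_affineSpan, vectorSpan_def]
      refine Submodule.span_le.2 ?_
      rintro v ⟨a, ha, b, hb, rfl⟩
      have ha' : a ∈ σ.erase p := Finset.mem_coe.1 ha
      have hb' : b ∈ σ.erase p := Finset.mem_coe.1 hb
      have haσ : a ∈ σ := Finset.mem_of_mem_erase ha'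
      have hbσ : b ∈ σ := Finset.mem_of_mem_erase hb'
      have hxa : ξ1 a = ξ2 a := heq a haσ (Finset.ne_of_mem_erase ha')
      have hxb : ξ1 b = ξ2 b := heq b hbσ (Finset.ne_of_mem_erase hb')
      have h := hww b hbσ a haσ
      rw [hxa, hxb] at h
      rw [SetLike.mem_coe, Submodule.mem_orthogonal_singleton_iff_inner_right]
      show (inner ℝ w (a - b) : ℝ) = 0
      linarith
    intro v hv
    exact Submodule.mem_orthogonal_singleton_iff_inner_right.1 (hdirle hv)
  -- decompose w
  set t : ℝ := ∑ q ∈ σ.erase p, c q with htdef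
  set u' : (EuclideanSpace ℝ (Fin d)) := ∑ q ∈ σ.erase p, c q • (q - m) with hu'def
  have hsum' : w = u' + t • (m - p) := by
    rw [← hsum, ← Finset.add_sum_erase σ _ hp]
    have hpp : c p • (p - p) = 0 := by rw [sub_self, smul_zero]
    rw [hpp, zero_add, hu'def, htdef, Finset.sum_smul]
    rw [← Finset.sum_add_distrib]
    refine Finset.sum_congr rfl fun q hq => ?_
    rw [← smul_add]
    congr 1
    abel
  have hu'dir : u' ∈ A.direction := by
    refine Submodule.sum_mem _ fun q hq => Submodule.smul_mem _ _ ?_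
    have hqA : q ∈ A := subset_affineSpan ℝ _ (Finset.mem_coe.2 hq)
    exact AffineSubspace.vsub_mem_direction hqA hmA
  have hinn_u' : ⟪w, u'⟫ = 0 := hwdir u' hu'dir
  have hinn_zu' : ⟪u', m - p⟫ = 0 := by
    have h0 : ⟪u', p -ᵥ m⟫ = 0 := (Submodule.mem_orthogonal _ _).1 hperpm u' hu'dir
    have hch : (p -ᵥ m : (EuclideanSpace ℝ (Fin d))) = -(m - p) := by
      show (p - m : (EuclideanSpace ℝ (Fin d))) = -(m - p); abel
    rw [hch, inner_neg_right] at h0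
    linarith
  have hwz : ⟪w, m - p⟫ = t * ‖m - p‖ ^ 2 := by
    rw [hsum', inner_add_left, real_inner_smul_left, hinn_zu', zero_add,
      real_inner_self_eq_norm_sq]
  have hw2a : ‖w‖ ^ 2 = t * (-(ε / 2)) := by
    have h0 : ⟪w, ∑ q ∈ σ, c q • (q - p)⟫ = ⟪w, w⟫ := by rw [hsum]
    rw [inner_sum] at h0
    simp only [real_inner_smul_right] at h0
    rw [← Finset.add_sum_erase σ _ hp] at h0
    have hpp : c p * ⟪w, p - p⟫ = 0 := by rw [sub_self, inner_zero_right, mul_zero]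
    rw [hpp, zero_add] at h0
    have hterm : ∑ q ∈ σ.erase p, c q * ⟪w, q - p⟫ = ∑ q ∈ σ.erase p, c q * (-(ε / 2)) := by
      refine Finset.sum_congr rfl fun q hq => ?_
      rw [hrel q (Finset.mem_of_mem_erase hq) (Finset.ne_of_mem_erase hq)]
    rw [hterm, ← Finset.sum_mul, ← htdef, real_inner_self_eq_norm_sq] at h0
    rw [← h0]
  have hw2b : ‖w‖ ^ 2 = t ^ 2 * ‖m - p‖ ^ 2 := by
    have h0 : ⟪w, w⟫ = ⟪w, u' + t • (m - p)⟫ := by rw [← hsum']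
    rw [inner_add_right, real_inner_smul_right, hinn_u', hwz, zero_add,
      real_inner_self_eq_norm_sq] at h0
    rw [h0]; ring
  -- main inequality : ‖w‖ * ‖m - p‖ ≤ |ε| / 2
  have hkey : ‖w‖ * ‖m - p‖ ≤ |ε| / 2 := by
    rcases eq_or_ne t 0 with ht | ht
    · have hw0 : ‖w‖ = 0 := by
        rw [ht] at hw2b
        simp only [ne_eq, OfNat.ofNat_ne_zero, not_false_eq_true, zero_pow, zero_mul] at hw2b
        exact pow_eq_zero_iff (by norm_num) |>.mp hw2b
      rw [hw0, zero_mul]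
      positivity
    · have habs : 0 < |t| := abs_pos.2 ht
      have h1 : t ^ 2 * ‖m - p‖ ^ 2 = t * (-(ε / 2)) := hw2b.symm.trans hw2a
      have h2 : |t| * ‖m - p‖ ^ 2 ≤ |ε| / 2 := by
        have hle : t * (-(ε / 2)) ≤ |t| * (|ε| / 2) := by
          calc t * (-(ε / 2)) ≤ |t * (-(ε / 2))| := le_abs_self _
            _ = |t| * (|ε| / 2) := by rw [abs_mul, abs_neg, abs_div]; norm_num
        have h3 : |t| * (|t| * ‖m - p‖ ^ 2) ≤ |t| * (|ε| / 2) := by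
          have : |t| * (|t| * ‖m - p‖ ^ 2) = t ^ 2 * ‖m - p‖ ^ 2 := by
            rw [← mul_assoc, abs_mul_abs_self]; ring
          rw [this, h1]; exact hle
        exact le_of_mul_le_mul_left h3 habs
      have hnw : ‖w‖ = |t| * ‖m - p‖ := by
        have hsq : ‖w‖ ^ 2 = (|t| * ‖m - p‖) ^ 2 := by
          rw [mul_pow, sq_abs]; exact hw2b
        have h0 : (0:ℝ) ≤ |t| * ‖m - p‖ := by positivity
        have := congrArg Real.sqrt hsq
        rwa [Real.sqrt_sq (norm_nonneg w), Real.sqrt_sq h0] at this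
      calc ‖w‖ * ‖m - p‖ = |t| * ‖m - p‖ ^ 2 := by rw [hnw]; ring
        _ ≤ |ε| / 2 := h2
  -- bounds on the geometric quantities
  have hDlam : lam ≤ Δ := by
    obtain ⟨ab, hab⟩ := hoff
    have h1 : Lmin ≤ dist ab.1 ab.2 := by
      rw [hLmin]; exact Finset.inf'_le _ hab
    have hab' : ab ∈ σ ×ˢ σ := by
      obtain ⟨h1', h2', _⟩ := Finset.mem_offDiag.1 hab
      exact Finset.mem_product.2 ⟨h1', h2'⟩
    have h2 : dist ab.1 ab.2 ≤ Δ := by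
      rw [hΔ]; exact Finset.le_sup' (fun pq => dist pq.1 pq.2) hab'
    linarith
  have hk1 : (1:ℝ) ≤ (k:ℝ) := by exact_mod_cast hk
  have hΔpos : 0 < Δ := lt_of_lt_of_le hlam hDlam
  have hkΔ : lam ≤ (k:ℝ) * Δ :=
    le_trans hDlam (by calc Δ = 1 * Δ := (one_mul Δ).symm
      _ ≤ (k:ℝ) * Δ := mul_le_mul_of_nonneg_right hk1 hΔpos.le)
  have hkΔpos : 0 < (k:ℝ) * Δ := lt_of_lt_of_le hlam hkΔ
  have hinfeq : Υ * ((k:ℝ) * Δ) = σ.inf' hσne fun q =>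
      Metric.infDist q (affineSpan ℝ ((σ.erase q : Finset _) : Set (EuclideanSpace ℝ (Fin d)))) := by
    rw [hΥ]
    exact div_mul_cancel₀ _ (ne_of_gt hkΔpos)
  have hDlow : Υ * lam ≤ ‖m - p‖ := by
    have h1 : (σ.inf' hσne fun q =>
        Metric.infDist q (affineSpan ℝ ((σ.erase q : Finset _) : Set (EuclideanSpace ℝ (Fin d)))))
        ≤ Metric.infDist p (affineSpan ℝ ((σ.erase p : Finset _) : Set (EuclideanSpace ℝ (Fin d)))) :=
      Finset.inf'_le _ hp
    have h2 : Metric.infDist p (A : Set (EuclideanSpace ℝ (Fin d))) ≤ dist p m := infDist_le_dist_of_mem hmA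
    have h3 : dist p m = ‖m - p‖ := by rw [dist_eq_norm, norm_sub_rev]
    have h4 : Υ * lam ≤ Υ * ((k:ℝ) * Δ) :=
      mul_le_mul_of_nonneg_left hkΔ (le_of_lt hΥpos)
    rw [hinfeq] at h4
    rw [hA] at h2
    rw [h3] at h2
    linarith
  -- the norm bound
  have hd : |ε| ≤ δ0 ^ 2 * lam ^ 2 := hdiff
  have hwbound : ‖w‖ ≤ δ0 ^ 2 * lam / (2 * Υ) := by
    have h5 : ‖w‖ * (Υ * lam) ≤ δ0 ^ 2 * lam ^ 2 / 2 := by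
      calc ‖w‖ * (Υ * lam) ≤ ‖w‖ * ‖m - p‖ :=
            mul_le_mul_of_nonneg_left hDlow (norm_nonneg w)
        _ ≤ |ε| / 2 := hkey
        _ ≤ δ0 ^ 2 * lam ^ 2 / 2 := by linarith
    rw [le_div_iff₀ (by positivity : (0:ℝ) < 2 * Υ)]
    nlinarith [h5, hlam, norm_nonneg w, mul_pos hΥpos hlam]
  constructor
  · have : ‖C1 - C2‖ = ‖w‖ := by rw [hw, norm_sub_rev]
    rw [this]; exact hwbound
  · intro r
    have hiso : Isometry (fun x : (EuclideanSpace ℝ (Fin d)) => x + w) :=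
      Isometry.of_dist_eq fun a b => dist_add_right a b w
    have himg : wNormal ξ2 σ = (fun x : (EuclideanSpace ℝ (Fin d)) => x + w) '' wNormal ξ1 σ := by
      ext y
      constructor
      · intro hy
        exact ⟨y - w, htrans' y hy, sub_add_cancel y w⟩
      · rintro ⟨x, hx, rfl⟩
        exact htrans x hx
    have h2 : Metric.infDist r (wNormal ξ2 σ) = Metric.infDist (r - w) (wNormal ξ1 σ) := by
      rw [himg]
      have hr : r = (fun x : (EuclideanSpace ℝ (Fin d)) => x + w) (r - w) := by simp [sub_add_cancel]
      conv_lhs => rw [hr]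
      exact infDist_image hiso
    have ha := infDist_le_infDist_add_dist (x := r) (y := r - w) (s := wNormal ξ1 σ)
    have hb := infDist_le_infDist_add_dist (x := r - w) (y := r) (s := wNormal ξ1 σ)
    have hdist : dist r (r - w) = ‖w‖ := by
      rw [dist_eq_norm]; congr 1; abel
    have hdist' : dist (r - w) r = ‖w‖ := by rw [dist_comm]; exact hdist
    rw [h2]
    rw [abs_sub_le_iff]
    constructor
    · linarith
    · linarith
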